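/- Assume conj(B) = B − 2πiH for a symmetric g×g integer matrix H. Let n ≥ 1 and V, W ∈ ℂ^g with conj(V) = −V and conj(W) = −W. For each j = 1,…,n let r_j ∈ ℂ^g and N_j, M_j ∈ ℤ^g satisfy conj(r_j) = −r_j − 2πiN_j − BM_j and 2N_j + HM_j = 0, and suppose ⟨HM_j,M_j⟩ + ⟨diag(H),M_j⟩ ≡ 0 (mod 4). Let E_j, F_j ∈ ℂ satisfy conj(E_j) = E_j − ⟨V,M_j⟩ and conj(F_j) = F_j + ⟨W,M_j⟩. Let q₂ⱼ ∈ ℂ∖{0} and α_j ∈ ℤ with q₂ⱼ = |q₂ⱼ|·exp( iπ(1+α_j) + (iπ/2)⟨HM_j,M_j⟩ − (1/2)⟨BM_j,M_j⟩ − ⟨r_j,M_j⟩ ). Let d = d_R + (iπ/2)(diag(H) − 2T) with d_R ∈ ℝ^g and T ∈ ℤ^g, let θ ∈ ℝ, and set A_j = |q₂ⱼ|^{1/2}·exp((1/2)⟨d_R,M_j⟩)·e^{iθ}. Define Z(x,t) = iVx + iWt, ψ_j(x,t) = A_j·Θ(Z−d+r_j)/Θ(Z−d)·exp(i(−E_jx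 + F_jt)), ψ*_j(x,t) = (q₂ⱼ/A_j)·Θ(Z−d−r_j)/Θ(Z−d)·exp(i(E_jx − F_jt)). Then for all real x, t with Θ(Z(x,t)−d) ≠ 0 and each j = 1,…,n, the n-NLS reality condition holds: ψ*_j(x,t) = s_j·conj(ψ_j(x,t)), where s_j = exp(iπ(1+α_j) + iπ⟨T,M_j⟩) ∈ {1,−1}. -/

import Mathlib

open Complex ComplexConjugate

noncomputable section

/-- Bilinear pairing ⟨u,v⟩ = Σ uᵢ vᵢ (no complex conjugation). -/
def pairC {g : ℕ} (u v : Fin g → ℂ) : ℂ := ∑ i, u i * v i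

/-- The Riemann theta function with period matrix `B`. -/
def theta {g : ℕ} (B : Matrix (Fin g) (Fin g) ℂ) (z : Fin g → ℂ) : ℂ :=
  ∑' m : Fin g → ℤ,
    Complex.exp ((1 / 2) * pairC (B.mulVec (fun i => (m i : ℂ))) (fun i => (m i : ℂ))
      + pairC (fun i => (m i : ℂ)) z)

lemma zmod2_add_self : ∀ x : ZMod 2, x + x = 0 := by decide
lemma zmod2_mul_self : ∀ x : ZMod 2, x * x = x := by decide

lemma parity_lemma {g : ℕ} (H : Matrix (Fin g) (Fin g) ℤ) (hHsymm : H.IsSymm)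
    (m : Fin g → ℤ) :
    2 ∣ (∑ i, H.mulVec m i * m i + ∑ i, H i i * m i) := by
  have key : (((∑ i, H.mulVec m i * m i + ∑ i, H i i * m i : ℤ)) : ZMod 2) = 0 := by
    push_cast [Matrix.mulVec, dotProduct]
    set a : Fin g × Fin g → ZMod 2 := fun p => (H p.1 p.2 : ZMod 2) * (m p.2 : ZMod 2) * (m p.1 : ZMod 2) with ha
    have h1 : ∑ i : Fin g, (∑ j : Fin g, (H i j : ZMod 2) * (m j : ZMod 2)) * (m i : ZMod 2)
        = ∑ p ∈ Finset.univ ×ˢ Finset.univ, a p := by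
      rw [Finset.sum_product]
      simp [ha, Finset.sum_mul]
    rw [h1, ← Finset.diag_union_offDiag, Finset.sum_union (Finset.disjoint_diag_offDiag _),
      Finset.sum_diag]
    have h2 : ∑ p ∈ Finset.univ.offDiag, a p = 0 := by
      apply Finset.sum_involution (fun p _ => (p.2, p.1))
      · intro p hp
        have hs : H p.2 p.1 = H p.1 p.2 := hHsymm.apply p.1 p.2
        simp only [ha, hs]
        rw [show (H p.1 p.2 : ZMod 2) * (m p.2:ZMod 2) * (m p.1:ZMod 2) + (H p.1 p.2:ZMod 2) * (m p.1:ZMod 2) * (m p.2:ZMod 2) = ((H p.1 p.2:ZMod 2) * (m p.2:ZMod 2) * (m p.1:ZMod 2)) + ((H p.1 p.2:ZMod 2) * (m p.2:ZMod 2) * (m p.1:ZMod 2)) by ring]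
        exact zmod2_add_self _
      · intro p hp _
        have hne := (Finset.mem_offDiag.mp hp).2.2
        intro hc
        exact hne (congrArg Prod.fst hc).symm
      · intro p hp
        have h := Finset.mem_offDiag.mp hp
        exact Finset.mem_offDiag.mpr ⟨h.2.1, h.1, h.2.2.symm⟩
      · intro p hp; rfl
    rw [h2]
    have h3 : ∀ i : Fin g, a (i, i) = (H i i : ZMod 2) * (m i : ZMod 2) := by
      intro i
      simp only [ha]
      rw [mul_assoc, zmod2_mul_self]
    simp only [h3]
    rw [add_zero, ← Finset.sum_add_distrib]
    simp [zmod2_add_self]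
  exact_mod_cast (ZMod.intCast_zmod_eq_zero_iff_dvd _ 2).mp key

lemma pairC_comm {g : ℕ} (u v : Fin g → ℂ) : pairC u v = pairC v u := by
  unfold pairC; exact Finset.sum_congr rfl fun i _ => mul_comm _ _

lemma pairC_mulVec_symm {g : ℕ} {B : Matrix (Fin g) (Fin g) ℂ} (hB : B.IsSymm)
    (u v : Fin g → ℂ) : pairC (B.mulVec u) v = pairC (B.mulVec v) u := by
  simp only [pairC, Matrix.mulVec, dotProduct, Finset.sum_mul]
  rw [Finset.sum_comm]
  refine Finset.sum_congr rfl fun i _ => Finset.sum_congr rfl fun j _ => ?_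
  rw [hB.apply i j]
  ring

lemma pairC_sub_left {g : ℕ} (u v w : Fin g → ℂ) :
    pairC (u - v) w = pairC u w - pairC v w := by
  simp only [pairC, Pi.sub_apply, sub_mul, Finset.sum_sub_distrib]

lemma pairC_sub_right {g : ℕ} (u v w : Fin g → ℂ) :
    pairC w (u - v) = pairC w u - pairC w v := by
  simp only [pairC, Pi.sub_apply, mul_sub, Finset.sum_sub_distrib]

lemma conj_pairz {g : ℕ} (m : Fin g → ℤ) (z : Fin g → ℂ) :
    conj (pairC (fun i => (m i : ℂ)) z) = ∑ i, (m i : ℂ) * conj (z i) := by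
  simp [pairC, map_sum]

lemma conj_pairBm {g : ℕ} (B : Matrix (Fin g) (Fin g) ℂ)
    (H : Matrix (Fin g) (Fin g) ℤ)
    (hBH : ∀ i j, conj (B i j) = B i j - 2 * (Real.pi : ℂ) * I * (H i j : ℂ))
    (m : Fin g → ℤ) :
    conj (pairC (B.mulVec (fun i => (m i : ℂ))) (fun i => (m i : ℂ)))
      = pairC (B.mulVec (fun i => (m i : ℂ))) (fun i => (m i : ℂ))
        - 2 * (Real.pi : ℂ) * I * ((∑ i, H.mulVec m i * m i : ℤ) : ℂ) := by
  simp only [pairC, Matrix.mulVec, dotProduct, map_sum, map_mul, map_intCast]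
  push_cast
  simp only [hBH]
  rw [Finset.mul_sum, ← Finset.sum_sub_distrib]
  refine Finset.sum_congr rfl fun i _ => ?_
  rw [Finset.sum_mul, Finset.sum_mul, Finset.sum_mul, Finset.mul_sum, ← Finset.sum_sub_distrib]
  exact Finset.sum_congr rfl fun j _ => by ring

lemma theta_conj {g : ℕ} (B : Matrix (Fin g) (Fin g) ℂ) (hBsymm : B.IsSymm)
    (H : Matrix (Fin g) (Fin g) ℤ) (hHsymm : H.IsSymm)
    (hBH : ∀ i j, conj (B i j) = B i j - 2 * (Real.pi : ℂ) * I * (H i j : ℂ))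
    (z w : Fin g → ℂ) (M k : Fin g → ℤ)
    (hzw : ∀ i, conj (z i) = w i - (Real.pi : ℂ) * I * (H i i : ℂ)
      - 2 * (Real.pi : ℂ) * I * (k i : ℂ)
      - B.mulVec (fun j => (M j : ℂ)) i) :
    conj (theta B z)
      = Complex.exp (-(1/2) * pairC (B.mulVec (fun i => (M i : ℂ))) (fun i => (M i : ℂ))
          + pairC (fun i => (M i : ℂ)) w) * theta B w := by
  unfold theta
  rw [starRingEnd_apply, tsum_star, ← (Equiv.addRight M).tsum_eq, ← tsum_mul_left]
  refine tsum_congr fun m => ?_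
  simp only [← starRingEnd_apply, Equiv.coe_addRight]
  rw [← Complex.exp_conj, ← Complex.exp_add, Complex.exp_eq_exp_iff_exists_int]
  obtain ⟨c, hc⟩ := parity_lemma H hHsymm (m + M)
  refine ⟨-(∑ i, (m + M) i * k i) - c, ?_⟩
  have hmMc : (fun i => (m i : ℂ))
      = (fun i => ((m + M) i : ℂ)) - (fun i => (M i : ℂ)) := by
    funext i
    simp only [Pi.add_apply, Pi.sub_apply]
    push_cast; ring
  rw [map_add, map_mul, conj_pairBm B H hBH (m + M), conj_pairz, hmMc,
    Matrix.mulVec_sub, pairC_sub_left, pairC_sub_right, pairC_sub_right,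
    pairC_sub_left, pairC_mulVec_symm hBsymm (fun i => ((m + M) i : ℂ))]
  have hhalf : conj ((1:ℂ)/2) = 1/2 := by
    rw [map_div₀, map_one, map_ofNat]
  rw [hhalf]
  have hsum : ∑ i, ((m + M) i : ℂ) * conj (z i)
      = pairC (fun i => ((m + M) i : ℂ)) w
        - (Real.pi : ℂ) * I * ((∑ i, H i i * (m + M) i : ℤ) : ℂ)
        - 2 * (Real.pi : ℂ) * I * ((∑ i, (m + M) i * k i : ℤ) : ℂ)
        - pairC (B.mulVec (fun i => (M i : ℂ))) (fun i => ((m + M) i : ℂ)) := by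
    simp only [hzw]
    push_cast
    simp only [pairC, mul_sub, Finset.sum_sub_distrib, Finset.mul_sum]
    congr 1
    · congr 1
      · congr 1
        exact Finset.sum_congr rfl fun i _ => by ring
      · exact Finset.sum_congr rfl fun i _ => by ring
    · exact Finset.sum_congr rfl fun i _ => by ring
  rw [hsum]
  have hsymm2 : pairC (B.mulVec (fun i => (M i : ℂ))) (fun i => ((m + M) i : ℂ))
      = pairC (B.mulVec (fun i => ((m + M) i : ℂ))) (fun i => (M i : ℂ)) :=
    pairC_mulVec_symm hBsymm _ _
  have hcC : ((∑ i, H.mulVec (m + M) i * (m + M) i : ℤ) : ℂ)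
      + ((∑ i, H i i * (m + M) i : ℤ) : ℂ)
      = 2 * (c : ℂ) := by exact_mod_cast congrArg (Int.cast : ℤ → ℂ) hc
  push_cast at hcC ⊢
  linear_combination (-(Real.pi : ℂ) * I) * hcC + (-(1:ℂ)/2) * hsymm2

/-- reality conditions `ψ*_j = s_j conj(ψ_j)` (with `s_j = ±1`)
for the theta-functional solutions of the multi-component NLS equation. -/
theorem stmt_15 {g n : ℕ} (hg : 1 ≤ g) (hn : 1 ≤ n) (B : Matrix (Fin g) (Fin g) ℂ)
    (hBsymm : B.IsSymm)
    (hBneg : ∀ x : Fin g → ℝ, x ≠ 0 → ∑ i, ∑ j, (B i j).re * x i * x j < 0)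
    (H : Matrix (Fin g) (Fin g) ℤ) (hHsymm : H.IsSymm)
    (hBH : ∀ i j, conj (B i j) = B i j - 2 * (Real.pi : ℂ) * I * (H i j : ℂ))
    (V W : Fin g → ℂ)
    (hV : ∀ i, conj (V i) = -V i) (hW : ∀ i, conj (W i) = -W i)
    (r : Fin n → Fin g → ℂ) (N M : Fin n → Fin g → ℤ)
    (hr : ∀ (j : Fin n) (i : Fin g), conj (r j i)
      = -r j i - 2 * (Real.pi : ℂ) * I * (N j i : ℂ)
        - B.mulVec (fun k => (M j k : ℂ)) i)
    (hNM : ∀ (j : Fin n) (i : Fin g), 2 * N j i + H.mulVec (M j) i = 0)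
    (hmod4 : ∀ j : Fin n,
      (4 : ℤ) ∣ (∑ i, H.mulVec (M j) i * M j i + ∑ i, H i i * M j i))
    (E F : Fin n → ℂ)
    (hE : ∀ j, conj (E j) = E j - ∑ i, V i * (M j i : ℂ))
    (hF : ∀ j, conj (F j) = F j + ∑ i, W i * (M j i : ℂ))
    (q₂ : Fin n → ℂ) (hq₂ne : ∀ j, q₂ j ≠ 0) (α : Fin n → ℤ)
    (hq₂ : ∀ j, q₂ j = ((‖q₂ j‖ : ℝ) : ℂ) *
      Complex.exp ((Real.pi : ℂ) * I * (1 + (α j : ℂ))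
        + ((Real.pi : ℂ) * I / 2) * ((∑ i, H.mulVec (M j) i * M j i : ℤ) : ℂ)
        - (1 / 2) * pairC (B.mulVec (fun i => (M j i : ℂ))) (fun i => (M j i : ℂ))
        - ∑ i, r j i * (M j i : ℂ)))
    (dR : Fin g → ℝ) (T : Fin g → ℤ) (d : Fin g → ℂ)
    (hd : ∀ i, d i = (dR i : ℂ)
      + ((Real.pi : ℂ) * I / 2) * ((H i i : ℂ) - 2 * (T i : ℂ)))
    (θ : ℝ) (A : Fin n → ℂ)
    (hA : ∀ j, A j = ((Real.sqrt (‖q₂ j‖) *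
        Real.exp ((1 / 2) * ∑ i, dR i * (M j i : ℝ)) : ℝ) : ℂ) *
      Complex.exp (I * (θ : ℂ)))
    (Z : ℝ → ℝ → Fin g → ℂ)
    (hZ : ∀ x t : ℝ, Z x t = fun i => I * V i * (x : ℂ) + I * W i * (t : ℂ))
    (ψ ψs : Fin n → ℝ → ℝ → ℂ)
    (hψ : ∀ (j : Fin n) (x t : ℝ), ψ j x t =
      A j * theta B (Z x t - d + r j) / theta B (Z x t - d) *
        Complex.exp (I * (-(E j * (x : ℂ)) + F j * (t : ℂ))))
    (hψs : ∀ (j : Fin n) (x t : ℝ), ψs j x t =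
      (q₂ j / A j) * theta B (Z x t - d - r j) / theta B (Z x t - d) *
        Complex.exp (I * (E j * (x : ℂ) - F j * (t : ℂ))))
    (s : Fin n → ℂ)
    (hs : ∀ j, s j = Complex.exp ((Real.pi : ℂ) * I * (1 + (α j : ℂ))
      + (Real.pi : ℂ) * I * ∑ i, (T i : ℂ) * (M j i : ℂ))) :
    ∀ j : Fin n, (s j = 1 ∨ s j = -1) ∧
      ∀ x t : ℝ, theta B (Z x t - d) ≠ 0 →
        ψs j x t = s j * conj (ψ j x t) := by
  intro j
  constructor
  · -- s j = ±1
    have hs2 : s j = (-1 : ℂ) ^ (1 + α j + ∑ i, T i * M j i) := by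
      rw [hs j,
        show (Real.pi : ℂ) * I * (1 + (α j : ℂ))
            + (Real.pi : ℂ) * I * ∑ i, (T i : ℂ) * (M j i : ℂ)
          = ((1 + α j + ∑ i, T i * M j i : ℤ) : ℂ) * ((Real.pi : ℂ) * I) by
          push_cast; ring,
        Complex.exp_int_mul, Complex.exp_pi_mul_I]
    rcases Int.even_or_odd (1 + α j + ∑ i, T i * M j i) with he | ho
    · left; rw [hs2, he.neg_one_zpow]
    · right; rw [hs2, ho.neg_one_zpow]
  · intro x t hθ
    have habs : ‖q₂ j‖ ≠ 0 := by
      simpa using hq₂ne j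
    have habspos : 0 < ‖q₂ j‖ := lt_of_le_of_ne (norm_nonneg _) (Ne.symm habs)
    have hAne : A j ≠ 0 := by
      rw [hA j]
      apply mul_ne_zero _ (Complex.exp_ne_zero _)
      rw [Complex.ofReal_ne_zero]
      positivity
    -- conjugation of Z - d
    have hdconj : ∀ i, conj (Z x t i - d i)
        = (Z x t i - d i) + (Real.pi : ℂ) * I * (H i i : ℂ)
          - 2 * (Real.pi : ℂ) * I * (T i : ℂ) := by
      intro i
      simp only [hZ x t, hd i, map_sub, map_add, map_mul, Complex.conj_I,
        Complex.conj_ofReal, map_intCast, map_ofNat, map_div₀, map_one, hV i, hW i]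
      ring
    -- conj of theta(Z - d)
    have hzw0 : ∀ i, conj ((Z x t - d) i) = (Z x t - d) i
        - (Real.pi : ℂ) * I * (H i i : ℂ)
        - 2 * (Real.pi : ℂ) * I * (((T - fun i => H i i) i : ℤ) : ℂ)
        - B.mulVec (fun k => (((0 : Fin g → ℤ) k : ℤ) : ℂ)) i := by
      intro i
      have hmv : B.mulVec (fun k => (((0 : Fin g → ℤ) k : ℤ) : ℂ)) i = 0 := by
        have : (fun k => (((0 : Fin g → ℤ) k : ℤ) : ℂ)) = (0 : Fin g → ℂ) := by
          funext k; simp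
        rw [this, Matrix.mulVec_zero]; rfl
      simp only [Pi.sub_apply, hmv]
      rw [hdconj i]
      push_cast
      ring
    have hconj0 : conj (theta B (Z x t - d)) = theta B (Z x t - d) := by
      have h0 := theta_conj B hBsymm H hHsymm hBH (Z x t - d) (Z x t - d) 0
        (T - fun i => H i i) hzw0
      have hz0 : (fun i => (((0 : Fin g → ℤ) i : ℤ) : ℂ)) = (fun _ : Fin g => (0:ℂ)) := by
        funext i; simp
      rw [h0, hz0]
      simp [pairC]
    -- conj of theta(Z - d + r j)
    have hzwp : ∀ i, conj ((Z x t - d + r j) i) = (Z x t - d - r j) i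
        - (Real.pi : ℂ) * I * (H i i : ℂ)
        - 2 * (Real.pi : ℂ) * I * ((((T - fun i => H i i) + N j) i : ℤ) : ℂ)
        - B.mulVec (fun k => (M j k : ℂ)) i := by
      intro i
      simp only [Pi.add_apply, Pi.sub_apply, map_add]
      rw [hdconj i, hr j i]
      push_cast
      ring
    have hconjp : conj (theta B (Z x t - d + r j))
        = Complex.exp (-(1/2) * pairC (B.mulVec (fun i => (M j i : ℂ))) (fun i => (M j i : ℂ))
            + pairC (fun i => (M j i : ℂ)) (Z x t - d - r j))
          * theta B (Z x t - d - r j) :=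
      theta_conj B hBsymm H hHsymm hBH (Z x t - d + r j) (Z x t - d - r j) (M j)
        ((T - fun i => H i i) + N j) hzwp
    -- conj of ψ
    have hconjE : conj (I * (-(E j * (x : ℂ)) + F j * (t : ℂ)))
        = I * conj (E j) * (x : ℂ) - I * conj (F j) * (t : ℂ) := by
      simp only [map_add, map_mul, map_neg, Complex.conj_I, Complex.conj_ofReal]
      ring
    have hconjψ : conj (ψ j x t)
        = conj (A j)
          * (Complex.exp (-(1/2) * pairC (B.mulVec (fun i => (M j i : ℂ))) (fun i => (M j i : ℂ))
              + pairC (fun i => (M j i : ℂ)) (Z x t - d - r j))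
            * theta B (Z x t - d - r j))
          / theta B (Z x t - d)
          * Complex.exp (I * conj (E j) * (x : ℂ) - I * conj (F j) * (t : ℂ)) := by
      rw [hψ j x t]
      simp only [map_mul, map_div₀]
      rw [hconj0, hconjp, ← Complex.exp_conj, hconjE]
    -- A * conj A
    have hAA : A j * conj (A j) = ((‖q₂ j‖ : ℝ) : ℂ)
        * Complex.exp (((∑ i, dR i * (M j i : ℝ) : ℝ)) : ℂ) := by
      rw [hA j]
      have h1 : conj (Complex.exp (I * (θ : ℂ))) = Complex.exp (-(I * (θ : ℂ))) := by
        rw [← Complex.exp_conj]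
        congr 1
        simp only [map_mul, Complex.conj_I, Complex.conj_ofReal]
        ring
      rw [map_mul, Complex.conj_ofReal, h1, Complex.ofReal_mul, Complex.ofReal_exp]
      have h2 : ((Real.sqrt (‖q₂ j‖) : ℝ) : ℂ)
          * ((Real.sqrt (‖q₂ j‖) : ℝ) : ℂ)
          = ((‖q₂ j‖ : ℝ) : ℂ) := by
        rw [← Complex.ofReal_mul, Real.mul_self_sqrt (norm_nonneg _)]
      have h3 : Complex.exp (((1 / 2 * ∑ i, dR i * (M j i : ℝ) : ℝ)) : ℂ)
          * Complex.exp (((1 / 2 * ∑ i, dR i * (M j i : ℝ) : ℝ)) : ℂ)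
          = Complex.exp (((∑ i, dR i * (M j i : ℝ) : ℝ)) : ℂ) := by
        rw [← Complex.exp_add]
        congr 1
        push_cast
        ring
      have h4 : Complex.exp (I * (θ : ℂ)) * Complex.exp (-(I * (θ : ℂ))) = 1 := by
        rw [← Complex.exp_add]
        simp
      linear_combination
        (Complex.exp (((1 / 2 * ∑ i, dR i * (M j i : ℝ) : ℝ)) : ℂ)
          * Complex.exp (((1 / 2 * ∑ i, dR i * (M j i : ℝ) : ℝ)) : ℂ)
          * Complex.exp (I * (θ : ℂ)) * Complex.exp (-(I * (θ : ℂ)))) * h2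
        + (((‖q₂ j‖ : ℝ) : ℂ) * Complex.exp (I * (θ : ℂ))
            * Complex.exp (-(I * (θ : ℂ)))) * h3
        + (((‖q₂ j‖ : ℝ) : ℂ)
            * Complex.exp (((∑ i, dR i * (M j i : ℝ) : ℝ)) : ℂ)) * h4
    -- expansion of the pairing with Z - d - r
    have hpair : pairC (fun i => (M j i : ℂ)) (Z x t - d - r j)
        = I * (x : ℂ) * (∑ i, V i * (M j i : ℂ)) + I * (t : ℂ) * (∑ i, W i * (M j i : ℂ))
          - (∑ i, ((dR i : ℝ) : ℂ) * (M j i : ℂ))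
          - ((Real.pi : ℂ) * I / 2) * (∑ i, (H i i : ℂ) * (M j i : ℂ))
          + (Real.pi : ℂ) * I * (∑ i, (T i : ℂ) * (M j i : ℂ))
          - (∑ i, r j i * (M j i : ℂ)) := by
      simp only [pairC, Pi.sub_apply, hZ x t, hd, Finset.mul_sum]
      rw [← Finset.sum_add_distrib, ← Finset.sum_sub_distrib, ← Finset.sum_sub_distrib,
        ← Finset.sum_add_distrib, ← Finset.sum_sub_distrib]
      exact Finset.sum_congr rfl fun i _ => by push_cast; ring
    -- the key scalar identity
    obtain ⟨c4, hc4⟩ := hmod4 j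
    have hc4C : (∑ i, ((H.mulVec (M j) i : ℤ) : ℂ) * ((M j i : ℤ) : ℂ))
        + (∑ i, ((H i i : ℤ) : ℂ) * ((M j i : ℤ) : ℂ)) = 4 * (c4 : ℂ) := by
      have := congrArg (Int.cast : ℤ → ℂ) hc4
      push_cast at this
      exact this
    have hexp : Complex.exp ((Real.pi : ℂ) * I * (1 + (α j : ℂ))
          + ((Real.pi : ℂ) * I / 2) * ((∑ i, H.mulVec (M j) i * M j i : ℤ) : ℂ)
          - (1 / 2) * pairC (B.mulVec (fun i => (M j i : ℂ))) (fun i => (M j i : ℂ))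
          - (∑ i, r j i * (M j i : ℂ))
          + I * (E j * (x : ℂ) - F j * (t : ℂ)))
        = Complex.exp (((Real.pi : ℂ) * I * (1 + (α j : ℂ))
            + (Real.pi : ℂ) * I * ∑ i, (T i : ℂ) * (M j i : ℂ))
          + (((∑ i, dR i * (M j i : ℝ) : ℝ)) : ℂ)
          + (-(1/2) * pairC (B.mulVec (fun i => (M j i : ℂ))) (fun i => (M j i : ℂ))
              + pairC (fun i => (M j i : ℂ)) (Z x t - d - r j))
          + (I * (E j - ∑ i, V i * (M j i : ℂ)) * (x : ℂ)
              - I * (F j + ∑ i, W i * (M j i : ℂ)) * (t : ℂ))) := by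
      rw [Complex.exp_eq_exp_iff_exists_int]
      refine ⟨c4 - ∑ i, T i * M j i, ?_⟩
      rw [hpair]
      push_cast
      linear_combination ((Real.pi : ℂ) * I / 2) * hc4C
    have key : q₂ j * Complex.exp (I * (E j * (x : ℂ) - F j * (t : ℂ)))
        = s j * (A j * conj (A j))
          * Complex.exp (-(1/2) * pairC (B.mulVec (fun i => (M j i : ℂ))) (fun i => (M j i : ℂ))
              + pairC (fun i => (M j i : ℂ)) (Z x t - d - r j))
          * Complex.exp (I * conj (E j) * (x : ℂ) - I * conj (F j) * (t : ℂ)) := by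
      have hexp' : Complex.exp ((Real.pi : ℂ) * I * (1 + (α j : ℂ))
            + ((Real.pi : ℂ) * I / 2) * ((∑ i, H.mulVec (M j) i * M j i : ℤ) : ℂ)
            - (1 / 2) * pairC (B.mulVec (fun i => (M j i : ℂ))) (fun i => (M j i : ℂ))
            - (∑ i, r j i * (M j i : ℂ)))
          * Complex.exp (I * (E j * (x : ℂ) - F j * (t : ℂ)))
          = Complex.exp ((Real.pi : ℂ) * I * (1 + (α j : ℂ))
              + (Real.pi : ℂ) * I * ∑ i, (T i : ℂ) * (M j i : ℂ))
            * Complex.exp ((((∑ i, dR i * (M j i : ℝ) : ℝ)) : ℂ))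
            * Complex.exp (-(1/2) * pairC (B.mulVec (fun i => (M j i : ℂ))) (fun i => (M j i : ℂ))
                + pairC (fun i => (M j i : ℂ)) (Z x t - d - r j))
            * Complex.exp (I * (E j - ∑ i, V i * (M j i : ℂ)) * (x : ℂ)
                - I * (F j + ∑ i, W i * (M j i : ℂ)) * (t : ℂ)) := by
        rw [← Complex.exp_add, ← Complex.exp_add, ← Complex.exp_add, ← Complex.exp_add]
        exact hexp
      rw [hq₂ j, hs j, hAA, hE j, hF j]
      linear_combination (((‖q₂ j‖ : ℝ)) : ℂ) * hexp'
    have key2 : q₂ j / A j * Complex.exp (I * (E j * (x : ℂ) - F j * (t : ℂ)))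
        = s j * conj (A j)
          * Complex.exp (-(1/2) * pairC (B.mulVec (fun i => (M j i : ℂ))) (fun i => (M j i : ℂ))
              + pairC (fun i => (M j i : ℂ)) (Z x t - d - r j))
          * Complex.exp (I * conj (E j) * (x : ℂ) - I * conj (F j) * (t : ℂ)) := by
      rw [div_mul_eq_mul_div, div_eq_iff hAne]
      linear_combination key
    calc ψs j x t
        = (q₂ j / A j * Complex.exp (I * (E j * (x : ℂ) - F j * (t : ℂ))))
            * (theta B (Z x t - d - r j) / theta B (Z x t - d)) := by
          rw [hψs j x t]; ring
      _ = (s j * conj (A j)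
            * Complex.exp (-(1/2) * pairC (B.mulVec (fun i => (M j i : ℂ))) (fun i => (M j i : ℂ))
                + pairC (fun i => (M j i : ℂ)) (Z x t - d - r j))
            * Complex.exp (I * conj (E j) * (x : ℂ) - I * conj (F j) * (t : ℂ)))
            * (theta B (Z x t - d - r j) / theta B (Z x t - d)) := by rw [key2]
      _ = s j * conj (ψ j x t) := by rw [hconjψ]; ring
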